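/- For any formula φ of Åqvist's language: φ is valid in all preference models with W finite and ⪰ transitive if and only if φ is valid in all smooth preference models with ⪰ transitive. -/

import Mathlib

/-- Formulas of Åqvist's dyadic deontic language. -/
inductive PForm (V : Type) : Type
  | var : V → PForm V
  | neg : PForm V → PForm V
  | conj : PForm V → PForm V → PForm V
  | box : PForm V → PForm V
  | ob : PForm V → PForm V → PForm V   -- `ob γ α` is ◯(γ/α)

/-- Strict version of a binary relation: `a ≻ b` iff `a ⪰ b` and `¬ b ⪰ a`. -/
def strictRel {W : Type} (r : W → W → Prop) (a b : W) : Prop := r a b ∧ ¬ r b a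

/-- ≻-maximal elements of a set `U`. -/
def maxSet {W : Type} (r : W → W → Prop) (U : Set W) : Set W :=
  {v | v ∈ U ∧ ¬ ∃ u ∈ U, strictRel r u v}

/-- A preference model. -/
structure PrefModel (V : Type) : Type 1 where
  W : Type
  rel : W → W → Prop
  val : V → Set W

/-- Truth set of a formula in a preference model. -/
def truthSet {V : Type} (M : PrefModel V) : PForm V → Set M.W
  | .var x => M.val x
  | .neg ψ => (truthSet M ψ)ᶜ
  | .conj ψ₁ ψ₂ => truthSet M ψ₁ ∩ truthSet M ψ₂
  | .box β => {_w | truthSet M β = Set.univ}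
  | .ob γ α => {_w | maxSet M.rel (truthSet M α) ⊆ truthSet M γ}

/-- A model validates a formula when it is true at all worlds. -/
def valid {V : Type} (M : PrefModel V) (φ : PForm V) : Prop :=
  truthSet M φ = Set.univ

/-- Limitedness of a preference model. -/
def Limited {V : Type} (M : PrefModel V) : Prop :=
  ∀ α : PForm V, (truthSet M α).Nonempty → (maxSet M.rel (truthSet M α)).Nonempty

/-- Smoothness of a preference model. -/
def SmoothModel {V : Type} (M : PrefModel V) : Prop :=
  ∀ (α : PForm V) (w : M.W), w ∈ truthSet M α →
    ∃ u ∈ maxSet M.rel (truthSet M α), u = w ∨ strictRel M.rel u w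

/-- Subformulas of a formula (including the formula itself). -/
def Subf {V : Type} : PForm V → Set (PForm V)
  | .var x => {.var x}
  | .neg ψ => insert (.neg ψ) (Subf ψ)
  | .conj ψ₁ ψ₂ => insert (.conj ψ₁ ψ₂) (Subf ψ₁ ∪ Subf ψ₂)
  | .box β => insert (.box β) (Subf β)
  | .ob γ α => insert (.ob γ α) (Subf γ ∪ Subf α)



lemma strict_trans {W : Type} {r : W → W → Prop} (htr : Transitive r) :
    Transitive (strictRel r) := fun _a _b _c h1 h2 =>
  ⟨htr h1.1 h2.1, fun h => h2.2 (htr h h1.1)⟩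

lemma mem_subf_self {V : Type} (ψ : PForm V) : ψ ∈ Subf ψ := by
  cases ψ <;> simp [Subf]

lemma subf_closed {V : Type} : ∀ {φ ψ χ : PForm V}, ψ ∈ Subf φ → χ ∈ Subf ψ → χ ∈ Subf φ := by
  intro φ
  induction φ with
  | var x => intro ψ χ h hc; simp [Subf] at h; subst h; exact hc
  | neg φ₁ ih =>
      intro ψ χ h hc
      rcases h with h | h
      · subst h; exact hc
      · exact Set.mem_insert_iff.mpr (Or.inr (ih h hc))
  | conj φ₁ φ₂ ih1 ih2 =>
      intro ψ χ h hc
      rcases h with h | h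
      · subst h; exact hc
      · rcases h with h | h
        · exact Set.mem_insert_iff.mpr (Or.inr (Or.inl (ih1 h hc)))
        · exact Set.mem_insert_iff.mpr (Or.inr (Or.inr (ih2 h hc)))
  | box φ₁ ih =>
      intro ψ χ h hc
      rcases h with h | h
      · subst h; exact hc
      · exact Set.mem_insert_iff.mpr (Or.inr (ih h hc))
  | ob φ₁ φ₂ ih1 ih2 =>
      intro ψ χ h hc
      rcases h with h | h
      · subst h; exact hc
      · rcases h with h | h
        · exact Set.mem_insert_iff.mpr (Or.inr (Or.inl (ih1 h hc)))
        · exact Set.mem_insert_iff.mpr (Or.inr (Or.inr (ih2 h hc)))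

lemma subf_finite {V : Type} (φ : PForm V) : (Subf φ).Finite := by
  induction φ with
  | var x => exact Set.finite_singleton _
  | neg ψ ih => exact ih.insert _
  | conj ψ₁ ψ₂ ih1 ih2 => exact (ih1.union ih2).insert _
  | box β ih => exact ih.insert _
  | ob γ α ih1 ih2 => exact (ih1.union ih2).insert _

def ants {V : Type} : PForm V → List (PForm V)
  | .var _ => []
  | .neg ψ => ants ψ
  | .conj ψ₁ ψ₂ => ants ψ₁ ++ ants ψ₂
  | .box β => ants β
  | .ob γ α => α :: (ants γ ++ ants α)

lemma mem_ants {V : Type} {φ γ α : PForm V} (h : PForm.ob γ α ∈ Subf φ) : α ∈ ants φ := by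
  induction φ with
  | var x => simp [Subf] at h
  | neg ψ ih =>
      rcases h with h | h
      · cases h
      · exact ih h
  | conj ψ₁ ψ₂ ih1 ih2 =>
      rcases h with h | h
      · cases h
      · rcases h with h | h
        · exact List.mem_append.mpr (Or.inl (ih1 h))
        · exact List.mem_append.mpr (Or.inr (ih2 h))
  | box β ih =>
      rcases h with h | h
      · cases h
      · exact ih h
  | ob γ' α' ih1 ih2 =>
      rcases h with h | h
      · injection h with h1 h2; subst h2; exact List.mem_cons_self
      · rcases h with h | h
        · exact List.mem_cons_of_mem _ (List.mem_append.mpr (Or.inl (ih1 h)))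
        · exact List.mem_cons_of_mem _ (List.mem_append.mpr (Or.inr (ih2 h)))

section Fix
variable {V W : Type} [DecidableEq (PForm V)]
  (r : W → W → Prop) (T : PForm V → Set W) (d : W → PForm V → W)

def fixS (L : List (PForm V)) (v : W) : Set W :=
  {v} ∪ {w | ∃ α, ∃ _h : α ∈ L, v ∈ T α ∧ v ∉ maxSet r (T α) ∧
      w ∈ fixS (L.erase α) (d v α)}
termination_by L.length
decreasing_by
  have := List.length_erase_of_mem _h
  have : 0 < L.length := List.length_pos_iff.mpr (List.ne_nil_of_mem _h)
  omega

lemma mem_fixS_iff (L : List (PForm V)) (v w : W) :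
    w ∈ fixS r T d L v ↔ w = v ∨ ∃ α, ∃ _h : α ∈ L, v ∈ T α ∧ v ∉ maxSet r (T α) ∧
      w ∈ fixS r T d (L.erase α) (d v α) := by
  rw [fixS]; rfl

lemma mem_fixS_self (L : List (PForm V)) (v : W) : v ∈ fixS r T d L v :=
  (mem_fixS_iff r T d L v v).mpr (Or.inl rfl)

lemma fixS_finite : ∀ (n : ℕ) (L : List (PForm V)), L.length = n → ∀ v,
    (fixS r T d L v).Finite := by
  intro n
  induction n using Nat.strong_induction_on with
  | _ n IH =>
    intro L hL v
    have hsub : fixS r T d L v ⊆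
        insert v (⋃ α ∈ L.toFinset, fixS r T d (L.erase α) (d v α)) := by
      intro w hw
      rcases (mem_fixS_iff r T d L v w).mp hw with h | ⟨α, hα, _, _, hw'⟩
      · exact Or.inl h
      · exact Or.inr (Set.mem_biUnion (List.mem_toFinset.mpr hα) hw')
    refine Set.Finite.subset (Set.Finite.insert v ?_) hsub
    refine Set.Finite.biUnion (L.toFinset.finite_toSet) ?_
    intro α hα
    have hα' : α ∈ L := List.mem_toFinset.mp hα
    have hlt : (L.erase α).length < n := by
      have := List.length_erase_of_mem hα'
      have : 0 < L.length := List.length_pos_iff.mpr (List.ne_nil_of_mem hα')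
      omega
    exact IH _ hlt _ rfl _

lemma fixS_key (htr : Transitive r)
    (hd : ∀ v α, v ∈ T α → v ∉ maxSet r (T α) →
      d v α ∈ maxSet r (T α) ∧ strictRel r (d v α) v)
    (A : List (PForm V)) :
    ∀ (n : ℕ) (L : List (PForm V)), L.length = n → L ⊆ A → ∀ v,
    (∀ α ∈ A, α ∉ L → ∃ m ∈ maxSet r (T α), v = m ∨ strictRel r v m) →
    ∀ w ∈ fixS r T d L v, ∀ α ∈ A, w ∈ T α →
      w ∈ maxSet r (T α) ∨ ∃ u ∈ fixS r T d L v, u ∈ T α ∧ strictRel r u w := by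
  intro n
  induction n using Nat.strong_induction_on with
  | _ n IH =>
    intro L hL hLA v hsafe w hw α hαA hwT
    rcases (mem_fixS_iff r T d L v w).mp hw with h | ⟨α₀, hα₀, hvT, hvm, hw'⟩
    · subst h
      by_cases hαL : α ∈ L
      · by_cases hm : w ∈ maxSet r (T α)
        · exact Or.inl hm
        · refine Or.inr ⟨d w α, ?_, (hd w α hwT hm).1.1, (hd w α hwT hm).2⟩
          exact (mem_fixS_iff r T d L w (d w α)).mpr
            (Or.inr ⟨α, hαL, hwT, hm, mem_fixS_self r T d _ _⟩)
      · obtain ⟨m, hmmax, heq | hs⟩ := hsafe α hαA hαL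
        · exact Or.inl (heq ▸ hmmax)
        · exact absurd ⟨w, hwT, hs⟩ hmmax.2
    · have hlt : (L.erase α₀).length < n := by
        have := List.length_erase_of_mem hα₀
        have : 0 < L.length := List.length_pos_iff.mpr (List.ne_nil_of_mem hα₀)
        omega
      have hdv := hd v α₀ hvT hvm
      have hsafe' : ∀ β ∈ A, β ∉ L.erase α₀ →
          ∃ m ∈ maxSet r (T β), d v α₀ = m ∨ strictRel r (d v α₀) m := by
        intro β hβA hβ
        by_cases hβα : β = α₀
        · subst hβα; exact ⟨d v β, hdv.1, Or.inl rfl⟩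
        · have hβL : β ∉ L := fun hmem => hβ ((List.mem_erase_of_ne hβα).mpr hmem)
          obtain ⟨m, hmmax, heq | hs⟩ := hsafe β hβA hβL
          · exact ⟨m, hmmax, Or.inr (heq ▸ hdv.2)⟩
          · exact ⟨m, hmmax, Or.inr (strict_trans htr hdv.2 hs)⟩
      have hsub : fixS r T d (L.erase α₀) (d v α₀) ⊆ fixS r T d L v := by
        intro u hu
        exact (mem_fixS_iff r T d L v u).mpr (Or.inr ⟨α₀, hα₀, hvT, hvm, hu⟩)
      rcases IH _ hlt _ rfl (fun x hx => hLA (List.erase_subset hx)) _ hsafe' w hw' α hαA hwT with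
        h | ⟨u, hu, huT, hus⟩
      · exact Or.inl h
      · exact Or.inr ⟨u, hsub hu, huT, hus⟩

end Fix

lemma smooth_of_finite {V : Type} (M : PrefModel V) (h1 : Finite M.W)
    (h2 : Transitive M.rel) : SmoothModel M := by
  intro α
  have hir : ∀ a, ¬ strictRel M.rel a a := fun a h => h.2 h.1
  have hwf : WellFounded (strictRel M.rel) := by
    letI : IsTrans M.W (strictRel M.rel) := ⟨fun _a _b _c h h' => strict_trans h2 h h'⟩
    letI : IsIrrefl M.W (strictRel M.rel) := ⟨hir⟩
    exact Finite.wellFounded_of_trans_of_irrefl _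
  intro w
  induction w using WellFounded.induction hwf with
  | _ w IH =>
    intro hw
    by_cases hm : w ∈ maxSet M.rel (truthSet M α)
    · exact ⟨w, hm, Or.inl rfl⟩
    · have hex : ∃ u ∈ truthSet M α, strictRel M.rel u w := by
        by_contra hne
        exact hm ⟨hw, hne⟩
      obtain ⟨u, huT, hus⟩ := hex
      obtain ⟨m, hmmax, heq | hs⟩ := IH u hus huT
      · exact ⟨m, hmmax, Or.inr (heq ▸ hus)⟩
      · exact ⟨m, hmmax, Or.inr (strict_trans h2 hs hus)⟩


/-- A formula is valid in all finite transitive preference models iff it is valid in all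
smooth transitive preference models. -/
theorem stmt17 {V : Type} (φ : PForm V) :
    (∀ M : PrefModel V, Finite M.W → Transitive M.rel → valid M φ) ↔
    (∀ M : PrefModel V, SmoothModel M → Transitive M.rel → valid M φ) := by
  constructor
  · intro hfin M hsm htr
    classical
    by_contra hval
    obtain ⟨w₀, hw₀⟩ : ∃ w, w ∉ truthSet M φ := by
      by_contra h
      push_neg at h
      exact hval (Set.eq_univ_iff_forall.mpr h)
    set T : PForm V → Set M.W := truthSet M with hT
    set r : M.W → M.W → Prop := M.rel with hr
    -- dominator function from smoothness
    have hsel : ∀ (v : M.W) (α : PForm V), ∃ u : M.W,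
        v ∈ T α → v ∉ maxSet r (T α) → (u ∈ maxSet r (T α) ∧ strictRel r u v) := by
      intro v α
      by_cases h : v ∈ T α
      · obtain ⟨u, hu, hc⟩ := hsm α v h
        exact ⟨u, fun _ hnm => ⟨hu, hc.resolve_left (fun he => hnm (he ▸ hu))⟩⟩
      · exact ⟨v, fun h' => absurd h' h⟩
    choose d hd using hsel
    -- seed worlds for false box/ob subformulas
    have hseedsel : ∀ ψ : PForm V, ∃ v : M.W,
        (∀ β, ψ = PForm.box β → T β ≠ Set.univ → v ∉ T β) ∧
        (∀ γ α, ψ = PForm.ob γ α → ¬ maxSet r (T α) ⊆ T γ →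
          v ∈ maxSet r (T α) ∧ v ∉ T γ) := by
      intro ψ
      cases ψ with
      | var x => refine ⟨w₀, fun β h => ?_, fun γ α h => ?_⟩ <;> cases h
      | neg ψ' => refine ⟨w₀, fun β h => ?_, fun γ α h => ?_⟩ <;> cases h
      | conj ψ₁ ψ₂ => refine ⟨w₀, fun β h => ?_, fun γ α h => ?_⟩ <;> cases h
      | box β' =>
          by_cases h : T β' = Set.univ
          · refine ⟨w₀, fun β hh hne => ?_, fun γ α hh => ?_⟩
            · cases hh; exact absurd h hne
            · cases hh
          · obtain ⟨v, hv⟩ := (Set.ne_univ_iff_exists_notMem _).mp h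
            refine ⟨v, fun β hh _ => ?_, fun γ α hh => ?_⟩
            · cases hh; exact hv
            · cases hh
      | ob γ' α' =>
          by_cases h : maxSet r (T α') ⊆ T γ'
          · refine ⟨w₀, fun β hh => ?_, fun γ α hh hns => ?_⟩
            · cases hh
            · cases hh; exact absurd h hns
          · obtain ⟨v, hv1, hv2⟩ := Set.not_subset.mp h
            refine ⟨v, fun β hh => ?_, fun γ α hh _ => ?_⟩
            · cases hh
            · cases hh; exact ⟨hv1, hv2⟩
    choose seed hseedB hseedO using hseedsel
    set A : List (PForm V) := ants φ with hA
    -- the set of worlds of the small model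
    set W' : Set M.W :=
      fixS r T d A w₀ ∪ ⋃ ψ ∈ Subf φ, fixS r T d A (seed ψ) with hW'
    have hd' : ∀ (v : M.W) (α : PForm V), v ∈ T α → v ∉ maxSet r (T α) →
        d v α ∈ maxSet r (T α) ∧ strictRel r (d v α) v := hd
    have hW'fin : W'.Finite := by
      refine Set.Finite.union (fixS_finite r T d _ A rfl w₀) ?_
      exact Set.Finite.biUnion (subf_finite φ) (fun ψ _ => fixS_finite r T d _ A rfl _)
    -- key domination property of W'
    have hkey : ∀ w ∈ W', ∀ α, α ∈ A → w ∈ T α →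
        w ∈ maxSet r (T α) ∨ ∃ u ∈ W', u ∈ T α ∧ strictRel r u w := by
      intro w hw α hαA hwT
      have base : ∀ v : M.W, w ∈ fixS r T d A v →
          (fixS r T d A v ⊆ W') →
          w ∈ maxSet r (T α) ∨ ∃ u ∈ W', u ∈ T α ∧ strictRel r u w := by
        intro v hwv hsub
        rcases fixS_key r T d htr hd' A A.length A rfl (fun x hx => hx) v
            (fun β hβA hβ => absurd hβA hβ) w hwv α hαA hwT with
          h | ⟨u, hu, huT, hus⟩
        · exact Or.inl h
        · exact Or.inr ⟨u, hsub hu, huT, hus⟩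
      rcases hw with hw | hw
      · exact base w₀ hw (fun x hx => Or.inl hx)
      · obtain ⟨ψ, hψ, hwψ⟩ := Set.mem_iUnion₂.mp hw
        exact base (seed ψ) hwψ (fun x hx => Or.inr (Set.mem_biUnion hψ hx))
    -- seeds and w₀ belong to W'
    have hw₀W' : w₀ ∈ W' := Or.inl (mem_fixS_self r T d A w₀)
    have hseedW' : ∀ ψ ∈ Subf φ, seed ψ ∈ W' :=
      fun ψ hψ => Or.inr (Set.mem_biUnion hψ (mem_fixS_self r T d A (seed ψ)))
    -- the small model
    set M' : PrefModel V :=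
      ⟨{x : M.W // x ∈ W'}, fun a b => r a.1 b.1, fun p => {x | x.1 ∈ M.val p}⟩ with hM'
    have htr' : Transitive M'.rel := fun _a _b _c h h' => htr h h'
    have hfinW : Finite M'.W := hW'fin.to_subtype
    -- truth lemma
    have truth : ∀ ψ : PForm V, ψ ∈ Subf φ →
        truthSet M' ψ = Subtype.val ⁻¹' truthSet M ψ := by
      intro ψ
      induction ψ with
      | var x => intro _; rfl
      | neg ψ' ih =>
          intro h
          have hψ : ψ' ∈ Subf φ := subf_closed h (Set.mem_insert_iff.mpr (Or.inr (mem_subf_self ψ')))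
          show (truthSet M' ψ')ᶜ = Subtype.val ⁻¹' (truthSet M ψ')ᶜ
          rw [ih hψ]; rfl
      | conj ψ₁ ψ₂ ih1 ih2 =>
          intro h
          have hψ1 : ψ₁ ∈ Subf φ := subf_closed h
            (Set.mem_insert_iff.mpr (Or.inr (Or.inl (mem_subf_self ψ₁))))
          have hψ2 : ψ₂ ∈ Subf φ := subf_closed h
            (Set.mem_insert_iff.mpr (Or.inr (Or.inr (mem_subf_self ψ₂))))
          show truthSet M' ψ₁ ∩ truthSet M' ψ₂ = Subtype.val ⁻¹' (truthSet M ψ₁ ∩ truthSet M ψ₂)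
          rw [ih1 hψ1, ih2 hψ2]; rfl
      | box β ih =>
          intro h
          have hβ : β ∈ Subf φ := subf_closed h (Set.mem_insert_iff.mpr (Or.inr (mem_subf_self β)))
          have hiff : (truthSet M' β = Set.univ) ↔ (truthSet M β = Set.univ) := by
            rw [ih hβ]
            constructor
            · intro hpre
              by_contra hne
              have hv : seed (PForm.box β) ∉ T β := hseedB (PForm.box β) β rfl hne
              have hx : (⟨seed (PForm.box β), hseedW' _ h⟩ : M'.W) ∈
                  Subtype.val ⁻¹' truthSet M β := hpre ▸ Set.mem_univ _
              exact hv hx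
            · intro hu
              rw [hu]; ext x; simp
          ext x
          show (truthSet M' β = Set.univ) ↔ x.1 ∈ {_w : M.W | truthSet M β = Set.univ}
          simpa using hiff
      | ob γ α ih1 ih2 =>
          intro h
          have hγ : γ ∈ Subf φ := subf_closed h
            (Set.mem_insert_iff.mpr (Or.inr (Or.inl (mem_subf_self γ))))
          have hα : α ∈ Subf φ := subf_closed h
            (Set.mem_insert_iff.mpr (Or.inr (Or.inr (mem_subf_self α))))
          have hαA : α ∈ A := mem_ants h
          have hiff : (maxSet M'.rel (truthSet M' α) ⊆ truthSet M' γ) ↔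
              (maxSet r (T α) ⊆ T γ) := by
            rw [ih1 hγ, ih2 hα]
            constructor
            · intro hmax
              by_contra hns
              obtain ⟨hv1, hv2⟩ := hseedO (PForm.ob γ α) γ α rfl hns
              set x₀ : M'.W := ⟨seed (PForm.ob γ α), hseedW' _ h⟩ with hx₀
              have hx₀max : x₀ ∈ maxSet M'.rel (Subtype.val ⁻¹' truthSet M α) := by
                refine ⟨hv1.1, ?_⟩
                rintro ⟨u, huα, hsu⟩
                exact hv1.2 ⟨u.1, huα, hsu⟩
              have := hmax hx₀max
              exact hv2 this
            · intro hg x hx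
              rcases hkey x.1 x.2 α hαA hx.1 with hm | ⟨u, huW, huT, hus⟩
              · exact hg hm
              · exact absurd ⟨⟨u, huW⟩, huT, hus⟩ hx.2
          ext x
          show (maxSet M'.rel (truthSet M' α) ⊆ truthSet M' γ) ↔
            x.1 ∈ {_w : M.W | maxSet M.rel (truthSet M α) ⊆ truthSet M γ}
          simpa using hiff
    -- conclude
    have hvalid : valid M' φ := hfin M' hfinW htr'
    have : (⟨w₀, hw₀W'⟩ : M'.W) ∈ truthSet M' φ := by
      rw [hvalid]; exact Set.mem_univ _
    rw [truth φ (mem_subf_self φ)] at this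
    exact hw₀ this
  · intro hsm M hfinW htr
    exact hsm M (smooth_of_finite M hfinW htr) htr
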